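/- Let P be a polygon in the plane given by a cyclic sequence of vertices v_0, ..., v_{m-1} (m ≥ 3), forming a closed polygonal curve. If at every vertex the polygon is locally convex — i.e., for every i the cross product (v_{i+1} − v_i) × (v_i − v_{i−1}) has the same (weakly positive) sign — and the edge directions make exactly one full turn (total turning 2π), then the polygonal curve is the boundary of a convex polygon. -/

import Mathlib

open Complex Finset Real

noncomputable section LCPaux

/-- The cross-product functional `w ↦ Im (conj c * w)` as a linear map. -/
def crossL (c : ℂ) : ℂ →ₗ[ℝ] ℝ := Complex.imLm.comp (LinearMap.mulLeft ℝ ((starRingEnd ℂ) c))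

lemma crossL_apply (c w : ℂ) : crossL c w = ((starRingEnd ℂ) c * w).im := rfl

lemma crossL_self (c : ℂ) : crossL c c = 0 := by
  simp [crossL_apply, ← Complex.normSq_eq_conj_mul_self]

lemma crossL_coords (c w : ℂ) : crossL c w = c.re * w.im - c.im * w.re := by
  simp [crossL_apply, Complex.mul_im]; ring

/-- 2D Cramer identity. -/
lemma cross_identity (a b u : ℂ) :
    crossL a b • u = crossL a u • b - crossL b u • a := by
  simp only [crossL_coords, Complex.ext_iff, Complex.sub_re, Complex.sub_im,
    Complex.smul_re, Complex.smul_im, smul_eq_mul]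
  constructor <;> ring

lemma sum_range_natCast {M : Type*} [AddCommMonoid M] {m : ℕ} [NeZero m] (F : ZMod m → M) :
    ∑ k ∈ Finset.range m, F (k : ZMod m) = ∑ i : ZMod m, F i := by
  refine Finset.sum_nbij' (fun k => (k : ZMod m)) (fun i => i.val) ?_ ?_ ?_ ?_ ?_
  · intro a _; exact Finset.mem_univ _
  · intro i _; exact Finset.mem_range.2 (ZMod.val_lt i)
  · intro a ha; exact ZMod.val_cast_of_lt (Finset.mem_range.1 ha)
  · intro i _; exact ZMod.natCast_rightInverse i
  · intro a _; rfl

lemma sin_pos_exists {x : ℝ} (hx : 0 < Real.sin x) :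
    ∃ k : ℤ, 2 * k * π < x ∧ x < 2 * k * π + π := by
  have h2π : (0:ℝ) < 2 * π := by positivity
  set q : ℤ := ⌊x / (2 * π)⌋ with hq
  have h1 : (q : ℝ) * (2 * π) ≤ x := by
    have := Int.floor_le (x / (2 * π))
    rw [le_div_iff₀ h2π] at this; exact this
  have h2 : x < (q : ℝ) * (2 * π) + 2 * π := by
    have := Int.lt_floor_add_one (x / (2 * π))
    rw [div_lt_iff₀ h2π] at this; linarith
  set y : ℝ := x - q * (2 * π) with hy
  have hsy : Real.sin y = Real.sin x := by
    have : y + q * (2 * π) = x := by ring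
    rw [← this, Real.sin_add_int_mul_two_pi]
  have hy0 : 0 ≤ y := by simp [hy]; linarith
  have hy2 : y < 2 * π := by simp [hy]; linarith
  have hylt : y < π := by
    by_contra h
    push_neg at h
    have : Real.sin y ≤ 0 := by
      have : Real.sin (y - π) = -Real.sin y := Real.sin_sub_pi y
      nlinarith [Real.sin_nonneg_of_nonneg_of_le_pi (by linarith : (0:ℝ) ≤ y - π)
        (by linarith [Real.pi_pos] : y - π ≤ π)]
    linarith [hsy ▸ this, hx]
  have hygt : 0 < y := by
    rcases lt_or_eq_of_le hy0 with h | h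
    · exact h
    · exfalso; rw [← h] at hsy; simp at hsy; linarith
  exact ⟨q, by constructor <;> [nlinarith; nlinarith]⟩

lemma sin_neg_exists {x : ℝ} (hx : Real.sin x < 0) :
    ∃ k : ℤ, 2 * k * π + π < x ∧ x < 2 * k * π + 2 * π := by
  have : 0 < Real.sin (x + π) := by rw [Real.sin_add_pi]; linarith
  obtain ⟨k, h1, h2⟩ := sin_pos_exists this
  refine ⟨k - 1, ?_, ?_⟩ <;> push_cast <;> linarith

lemma four_sign_lemma {x1 x2 x3 x4 : ℝ} (h12 : x1 ≤ x2) (h23 : x2 ≤ x3) (h34 : x3 ≤ x4)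
    (hspan : x4 - x1 ≤ 2 * π) (s1 : 0 < Real.sin x1) (s2 : Real.sin x2 < 0)
    (s3 : 0 < Real.sin x3) (s4 : Real.sin x4 < 0) : False := by
  obtain ⟨k1, a1, b1⟩ := sin_pos_exists s1
  obtain ⟨k2, a2, b2⟩ := sin_neg_exists s2
  obtain ⟨k3, a3, b3⟩ := sin_pos_exists s3
  obtain ⟨k4, a4, b4⟩ := sin_neg_exists s4
  have pi_pos := Real.pi_pos
  have hk12 : k1 ≤ k2 := by
    by_contra h; push_neg at h
    have : (k2 : ℝ) + 1 ≤ k1 := by exact_mod_cast h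
    nlinarith
  have hk23 : k2 < k3 := by
    by_contra h; push_neg at h
    have : (k3 : ℝ) ≤ k2 := by exact_mod_cast h
    nlinarith
  have hk34 : k3 ≤ k4 := by
    by_contra h; push_neg at h
    have : (k4 : ℝ) + 1 ≤ k3 := by exact_mod_cast h
    nlinarith
  have : (k1 : ℝ) + 1 ≤ k4 := by exact_mod_cast by omega
  nlinarith

end LCPaux

set_option linter.unusedSectionVars false

section LCPtheta

open Complex Finset Real

variable {m : ℕ} [NeZero m] (v e : ZMod m → ℂ)

/-- cumulative direction angle of the edges -/
noncomputable def theta (e : ZMod m → ℂ) : ℕ → ℝ := fun n =>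
  Complex.arg (e 0) + ∑ k ∈ Finset.range n,
    Complex.arg (e ((k + 1 : ℕ) : ZMod m) / e (((k + 1 : ℕ) : ZMod m) - 1))

lemma theta_zero : theta e 0 = Complex.arg (e 0) := by simp [theta]

lemma theta_succ (n : ℕ) :
    theta e (n + 1) = theta e n + Complex.arg (e ((n + 1 : ℕ) : ZMod m) / e ((n : ℕ) : ZMod m)) := by
  have h : (((n + 1 : ℕ) : ZMod m) - 1) = ((n : ℕ) : ZMod m) := by push_cast; ring
  simp [theta, Finset.sum_range_succ, h, add_assoc]

lemma arg_ratio_mem (hne : ∀ i, e i ≠ 0)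
    (hconv : ∀ i, 0 ≤ ((starRingEnd ℂ) (e (i - 1)) * e i).im) (i : ZMod m) :
    0 ≤ Complex.arg (e i / e (i - 1)) ∧ Complex.arg (e i / e (i - 1)) ≤ π := by
  refine ⟨Complex.arg_nonneg_iff.2 ?_, Complex.arg_le_pi _⟩
  have hN : 0 < Complex.normSq (e (i - 1)) := Complex.normSq_pos.2 (hne _)
  have h := hconv i
  rw [Complex.mul_im] at h
  rw [Complex.div_im]
  rw [Complex.conj_re, Complex.conj_im] at h
  have heq : (e i).im * (e (i - 1)).re / Complex.normSq (e (i - 1)) -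
      (e i).re * (e (i - 1)).im / Complex.normSq (e (i - 1)) =
      ((e (i-1)).re * (e i).im + -(e (i-1)).im * (e i).re) / Complex.normSq (e (i - 1)) := by
    ring
  rw [heq]
  exact div_nonneg h hN.le

lemma theta_mono (hne : ∀ i, e i ≠ 0)
    (hconv : ∀ i, 0 ≤ ((starRingEnd ℂ) (e (i - 1)) * e i).im) : Monotone (theta e) := by
  apply monotone_nat_of_le_succ
  intro n
  rw [theta_succ]
  have h := (arg_ratio_mem e hne hconv (((n+1 : ℕ) : ZMod m))).1
  have hcast : (((n + 1 : ℕ) : ZMod m) - 1) = ((n : ℕ) : ZMod m) := by push_cast; ring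
  rw [hcast] at h
  linarith

lemma e_polar (hne : ∀ i, e i ≠ 0) : ∀ n : ℕ,
    e ((n : ℕ) : ZMod m) = (‖e ((n : ℕ) : ZMod m)‖ : ℂ) *
      Complex.exp (theta e n * Complex.I) := by
  intro n
  induction n with
  | zero => rw [theta_zero]; push_cast; exact (Complex.norm_mul_exp_arg_mul_I _).symm
  | succ n ih =>
    have ha : e ((n : ℕ) : ZMod m) ≠ 0 := hne _
    set r : ℂ := e ((n + 1 : ℕ) : ZMod m) / e ((n : ℕ) : ZMod m) with hr_def
    have hr := Complex.norm_mul_exp_arg_mul_I r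
    have hsplit : e ((n + 1 : ℕ) : ZMod m) = e ((n : ℕ) : ZMod m) * r := by
      rw [hr_def]; field_simp
    have key : (‖e ((n + 1 : ℕ) : ZMod m)‖ : ℂ) *
        Complex.exp (((theta e n + Complex.arg r : ℝ) : ℂ) * Complex.I)
        = ((‖e ((n : ℕ) : ZMod m)‖ : ℂ) * Complex.exp (theta e n * Complex.I)) *
          ((‖r‖ : ℂ) * Complex.exp (Complex.arg r * Complex.I)) := by
      rw [hsplit, norm_mul]
      push_cast
      rw [show ((theta e n : ℂ) + (Complex.arg r : ℂ)) * Complex.I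
          = (theta e n : ℂ) * Complex.I + (Complex.arg r : ℂ) * Complex.I by ring]
      rw [Complex.exp_add]
      ring
    rw [theta_succ, key, ← ih, hr]
    exact hsplit

end LCPtheta

section LCPa

open Complex Finset Real

variable {m : ℕ} [NeZero m] (v e : ZMod m → ℂ)

lemma theta_last (hturn : ∑ i : ZMod m, Complex.arg (e i / e (i - 1)) = 2 * π) :
    theta e m = theta e 0 + 2 * π := by
  have h1 : ∀ k : ℕ, Complex.arg (e ((k + 1 : ℕ) : ZMod m) / e (((k + 1 : ℕ) : ZMod m) - 1))
      = Complex.arg (e (((k : ℕ) : ZMod m) + 1) / e (((k : ℕ) : ZMod m) + 1 - 1)) := by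
    intro k; simp only [Nat.cast_add, Nat.cast_one]
  have h2 : theta e m = theta e 0 + ∑ k ∈ Finset.range m,
      Complex.arg (e (((k : ℕ) : ZMod m) + 1) / e (((k : ℕ) : ZMod m) + 1 - 1)) := by
    rw [theta_zero]
    unfold theta
    rw [Finset.sum_congr rfl (fun k _ => h1 k)]
  have h4 := sum_range_natCast (m := m)
    (fun j : ZMod m => Complex.arg (e (j + 1) / e (j + 1 - 1)))
  rw [h2, h4]
  have h3 : ∑ j : ZMod m, Complex.arg (e (j + 1) / e (j + 1 - 1))
      = ∑ i : ZMod m, Complex.arg (e i / e (i - 1)) :=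
    Fintype.sum_equiv (Equiv.addRight (1 : ZMod m)) _ _ (fun x => rfl)
  rw [h3, hturn]

lemma conj_polar (c : ℂ) : (starRingEnd ℂ) c
    = (‖c‖ : ℂ) * Complex.exp (-(Complex.arg c : ℂ) * Complex.I) := by
  conv_lhs => rw [← Complex.norm_mul_exp_arg_mul_I c]
  rw [map_mul, Complex.conj_ofReal, ← Complex.exp_conj, map_mul, Complex.conj_ofReal,
    Complex.conj_I]
  ring_nf

lemma crossL_e (hne : ∀ i, e i ≠ 0) (c : ℂ) (n : ℕ) :
    crossL c (e ((n : ℕ) : ZMod m)) = ‖c‖ * ‖e ((n : ℕ) : ZMod m)‖ *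
      Real.sin (theta e n - Complex.arg c) := by
  have key : (starRingEnd ℂ) c * e ((n : ℕ) : ZMod m)
      = ((‖c‖ * ‖e ((n : ℕ) : ZMod m)‖ : ℝ) : ℂ) *
        Complex.exp (((theta e n - Complex.arg c : ℝ) : ℂ) * Complex.I) := by
    conv_lhs => rw [conj_polar c, e_polar e hne n]
    push_cast
    rw [show ((theta e n : ℂ) - (Complex.arg c : ℂ)) * Complex.I
        = -(Complex.arg c : ℂ) * Complex.I + (theta e n : ℂ) * Complex.I by ring]
    rw [Complex.exp_add]
    ring
  rw [crossL_apply, key, Complex.mul_im, Complex.ofReal_re, Complex.ofReal_im,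
    Complex.exp_ofReal_mul_I_im]
  ring

lemma d_repr (he : ∀ i, e i = v (i + 1) - v i) (c : ℂ) : ∀ n : ℕ,
    crossL c (v ((n : ℕ) : ZMod m) - v 0)
      = ∑ k ∈ Finset.range n, crossL c (e ((k : ℕ) : ZMod m)) := by
  intro n
  induction n with
  | zero => simp
  | succ n ih =>
    have hstep : v ((n + 1 : ℕ) : ZMod m) - v 0
        = (v ((n : ℕ) : ZMod m) - v 0) + e ((n : ℕ) : ZMod m) := by
      rw [he ((n : ℕ) : ZMod m)]
      push_cast
      ring
    rw [hstep, map_add, ih, Finset.sum_range_succ]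

lemma halfplane_zero (he : ∀ i, e i = v (i + 1) - v i) (hne : ∀ i, e i ≠ 0)
    (hconv : ∀ i, 0 ≤ ((starRingEnd ℂ) (e (i - 1)) * e i).im)
    (hturn : ∑ i : ZMod m, Complex.arg (e i / e (i - 1)) = 2 * π) :
    ∀ n : ℕ, n ≤ m → 0 ≤ crossL (e 0) (v ((n : ℕ) : ZMod m) - v 0) := by
  intro n hn
  have hmono := theta_mono e hne hconv
  have hterm : ∀ k : ℕ, crossL (e 0) (e ((k : ℕ) : ZMod m))
      = ‖e 0‖ * ‖e ((k : ℕ) : ZMod m)‖ *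
        Real.sin (theta e k - theta e 0) := by
    intro k; rw [crossL_e e hne (e 0) k, ← theta_zero]
  rw [d_repr v e he (e 0) n]
  by_cases hcase : theta e n ≤ theta e 0 + π
  · apply Finset.sum_nonneg
    intro k hk
    rw [hterm]
    have hk' : k ≤ n := (Finset.mem_range.1 hk).le
    have h1 : 0 ≤ theta e k - theta e 0 := sub_nonneg.2 (hmono (Nat.zero_le k))
    have h2 : theta e k - theta e 0 ≤ π := by
      have := hmono hk'; linarith
    exact mul_nonneg (mul_nonneg (norm_nonneg _) (norm_nonneg _))
      (Real.sin_nonneg_of_nonneg_of_le_pi h1 h2)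
  · push_neg at hcase
    have hm0 : ((m : ℕ) : ZMod m) = (0 : ZMod m) := by exact_mod_cast ZMod.natCast_self m
    have hdm : ∑ k ∈ Finset.range m, crossL (e 0) (e ((k : ℕ) : ZMod m)) = 0 := by
      rw [← d_repr v e he (e 0) m, hm0, sub_self, map_zero]
    have hsplit : ∑ k ∈ Finset.Ico n m, crossL (e 0) (e ((k : ℕ) : ZMod m))
        = ∑ k ∈ Finset.range m, crossL (e 0) (e ((k : ℕ) : ZMod m))
          - ∑ k ∈ Finset.range n, crossL (e 0) (e ((k : ℕ) : ZMod m)) :=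
      Finset.sum_Ico_eq_sub _ hn
    have hnonpos : ∑ k ∈ Finset.Ico n m, crossL (e 0) (e ((k : ℕ) : ZMod m)) ≤ 0 := by
      apply Finset.sum_nonpos
      intro k hk
      obtain ⟨hk1, hk2⟩ := Finset.mem_Ico.1 hk
      rw [hterm]
      have h1 : π ≤ theta e k - theta e 0 := by
        have := hmono hk1; linarith
      have h2 : theta e k - theta e 0 ≤ 2 * π := by
        have h3 := hmono hk2.le
        have h4 := theta_last e hturn
        linarith
      have hs : Real.sin (theta e k - theta e 0) ≤ 0 := by
        have h5 := Real.sin_sub_pi (theta e k - theta e 0)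
        have h6 := Real.sin_nonneg_of_nonneg_of_le_pi
          (by linarith : (0:ℝ) ≤ theta e k - theta e 0 - π)
          (by linarith : theta e k - theta e 0 - π ≤ π)
        linarith
      have hA : 0 ≤ ‖e 0‖ * ‖e ((k : ℕ) : ZMod m)‖ :=
        mul_nonneg (norm_nonneg _) (norm_nonneg _)
      exact mul_nonpos_of_nonneg_of_nonpos hA hs
    linarith

end LCPa

section LCPshift

open Complex Finset Real

variable {m : ℕ} [NeZero m]

lemma halfplane (v e : ZMod m → ℂ) (he : ∀ i, e i = v (i + 1) - v i) (hne : ∀ i, e i ≠ 0)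
    (hconv : ∀ i, 0 ≤ ((starRingEnd ℂ) (e (i - 1)) * e i).im)
    (hturn : ∑ i : ZMod m, Complex.arg (e i / e (i - 1)) = 2 * π) :
    ∀ i j : ZMod m, 0 ≤ crossL (e i) (v j - v i) := by
  intro i j
  set v' : ZMod m → ℂ := fun k => v (k + i) with hv'
  set e' : ZMod m → ℂ := fun k => e (k + i) with he'
  have he'' : ∀ k, e' k = v' (k + 1) - v' k := by
    intro k
    simp only [hv', he']
    rw [he (k + i)]
    ring_nf
  have hne' : ∀ k, e' k ≠ 0 := fun k => hne _
  have hconv' : ∀ k, 0 ≤ ((starRingEnd ℂ) (e' (k - 1)) * e' k).im := by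
    intro k
    have : k - 1 + i = k + i - 1 := by ring
    simp only [he', this]
    exact hconv (k + i)
  have hturn' : ∑ k : ZMod m, Complex.arg (e' k / e' (k - 1)) = 2 * π := by
    have hstep : ∀ k : ZMod m, Complex.arg (e' k / e' (k - 1))
        = Complex.arg (e (k + i) / e ((k + i) - 1)) := by
      intro k
      simp only [he']
      congr 2
      ring_nf
    rw [Finset.sum_congr rfl (fun k _ => hstep k)]
    rw [Fintype.sum_equiv (Equiv.addRight i)
      (fun k => Complex.arg (e (k + i) / e (k + i - 1)))
      (fun k => Complex.arg (e k / e (k - 1))) (fun k => rfl)]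
    exact hturn
  have h0 := halfplane_zero v' e' he'' hne' hconv' hturn' (j - i).val (ZMod.val_lt _).le
  have hcast : (((j - i).val : ℕ) : ZMod m) = j - i := ZMod.natCast_rightInverse _
  rw [hcast] at h0
  simp only [hv', he', zero_add, sub_add_cancel] at h0
  exact h0

end LCPshift

section LCPchain

open Complex Finset Real

lemma chain_preconn (W : ℕ → ℂ) : ∀ n : ℕ,
    IsPreconnected ({W 0} ∪ ⋃ k ∈ Finset.range n, segment ℝ (W k) (W (k + 1))) ∧
    ∀ j ≤ n, W j ∈ ({W 0} ∪ ⋃ k ∈ Finset.range n, segment ℝ (W k) (W (k + 1))) := by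
  intro n
  induction n with
  | zero =>
    constructor
    · simpa using isPreconnected_singleton (x := W 0)
    · intro j hj
      rw [Nat.le_zero] at hj
      subst hj
      simp
  | succ n ih =>
    have hset : ({W 0} ∪ ⋃ k ∈ Finset.range (n + 1), segment ℝ (W k) (W (k + 1)))
        = ({W 0} ∪ ⋃ k ∈ Finset.range n, segment ℝ (W k) (W (k + 1)))
          ∪ segment ℝ (W n) (W (n + 1)) := by
      rw [Finset.range_add_one, Finset.set_biUnion_insert]
      ext x
      simp only [Set.mem_union, Set.mem_singleton_iff]
      tauto
    rw [hset]
    constructor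
    · exact IsPreconnected.union (W n) (ih.2 n le_rfl) (left_mem_segment ℝ _ _) ih.1
        (convex_segment _ _).isPreconnected
    · intro j hj
      rcases Nat.lt_or_ge j (n + 1) with h | h
      · exact Set.mem_union_left _ (ih.2 j (Nat.lt_succ_iff.1 h))
      · have : j = n + 1 := le_antisymm hj h
        subst this
        exact Set.mem_union_right _ (right_mem_segment ℝ _ _)

variable {m : ℕ} [NeZero m]

lemma cover_B0 (v e : ZMod m → ℂ) (he : ∀ i, e i = v (i + 1) - v i) (hne : ∀ i, e i ≠ 0)
    (hconv : ∀ i, 0 ≤ ((starRingEnd ℂ) (e (i - 1)) * e i).im)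
    (hturn : ∑ i : ZMod m, Complex.arg (e i / e (i - 1)) = 2 * π)
    (c : ℂ) (hc : c ≠ 0) (z : ℂ)
    (hz : z ∈ convexHull ℝ (Set.range v))
    (hmax : ∀ w ∈ convexHull ℝ (Set.range v), crossL c w ≤ crossL c z)
    (hmin : ∀ i : ZMod m, crossL c (v 0) ≤ crossL c (v i)) :
    z ∈ ⋃ i : ZMod m, segment ℝ (v i) (v (i + 1)) := by
  set M : ℝ := crossL c z with hM
  set g : ℕ → ℝ := fun n => crossL c (v ((n : ℕ) : ZMod m)) with hg
  have hvmem : ∀ j : ZMod m, v j ∈ convexHull ℝ (Set.range v) :=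
    fun j => subset_convexHull ℝ _ ⟨j, rfl⟩
  have hgM : ∀ n : ℕ, g n ≤ M := fun n => hmax _ (hvmem _)
  have hg0 : ∀ n : ℕ, g 0 ≤ g n := by
    intro n
    have := hmin ((n : ℕ) : ZMod m)
    simpa [hg] using this
  have hinc : ∀ k : ℕ, g (k + 1) - g k = crossL c (e ((k : ℕ) : ZMod m)) := by
    intro k
    have hcast : ((k + 1 : ℕ) : ZMod m) = ((k : ℕ) : ZMod m) + 1 := by push_cast; ring
    simp only [hg, hcast, he ((k : ℕ) : ZMod m), map_sub]
  have hsin : ∀ k : ℕ, g (k + 1) - g k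
      = ‖c‖ * ‖e ((k : ℕ) : ZMod m)‖
        * Real.sin (theta e k - Complex.arg c) := by
    intro k; rw [hinc k, crossL_e e hne c k]
  have hposfac : ∀ k : ℕ, 0 < ‖c‖ * ‖e ((k : ℕ) : ZMod m)‖ :=
    fun k => mul_pos (norm_pos_iff.mpr hc) (norm_pos_iff.mpr (hne _))
  have htel : ∀ n n' : ℕ, n ≤ n' →
      ∑ k ∈ Finset.Ico n n', (g (k + 1) - g k) = g n' - g n := by
    intro n n' hle
    rw [Finset.sum_Ico_eq_sub _ hle, Finset.sum_range_sub, Finset.sum_range_sub]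
    ring
  have hexpos : ∀ n n' : ℕ, n ≤ n' → g n < g n' →
      ∃ k, n ≤ k ∧ k < n' ∧ 0 < Real.sin (theta e k - Complex.arg c) := by
    intro n n' hle hlt
    by_contra hcon
    push_neg at hcon
    have : ∑ k ∈ Finset.Ico n n', (g (k + 1) - g k) ≤ 0 := by
      apply Finset.sum_nonpos
      intro k hk
      obtain ⟨h1, h2⟩ := Finset.mem_Ico.1 hk
      rw [hsin k]
      exact mul_nonpos_of_nonneg_of_nonpos (hposfac k).le (hcon k h1 h2)
    rw [htel n n' hle] at this
    linarith
  have hexneg : ∀ n n' : ℕ, n ≤ n' → g n' < g n →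
      ∃ k, n ≤ k ∧ k < n' ∧ Real.sin (theta e k - Complex.arg c) < 0 := by
    intro n n' hle hlt
    by_contra hcon
    push_neg at hcon
    have : 0 ≤ ∑ k ∈ Finset.Ico n n', (g (k + 1) - g k) := by
      apply Finset.sum_nonneg
      intro k hk
      obtain ⟨h1, h2⟩ := Finset.mem_Ico.1 hk
      rw [hsin k]
      exact mul_nonneg (hposfac k).le (hcon k h1 h2)
    rw [htel n n' hle] at this
    linarith
  -- representation of z as a convex combination
  set s : Finset ℂ := Finset.image v Finset.univ with hs_def
  have hs : (↑s : Set ℂ) = Set.range v := by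
    simp [hs_def]
  have hz' := hz
  rw [← hs, Finset.convexHull_eq] at hz'
  obtain ⟨w, hw0, hw1, hwz⟩ := hz'
  have z_eq : z = ∑ y ∈ s, w y • y := by
    rw [← hwz, Finset.centerMass_eq_of_sum_1 _ _ hw1]
    simp
  have hfz : M = ∑ y ∈ s, w y * crossL c y := by
    rw [hM, z_eq, map_sum]
    refine Finset.sum_congr rfl (fun y _ => ?_)
    rw [map_smul, smul_eq_mul]
  have hyle : ∀ y ∈ s, crossL c y ≤ M := by
    intro y hy
    exact hmax y (subset_convexHull ℝ _ (by rw [← hs]; exact_mod_cast hy))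
  have hzero : ∀ y ∈ s, w y * (M - crossL c y) = 0 := by
    have hsum0 : ∑ y ∈ s, w y * (M - crossL c y) = 0 := by
      have expand : ∑ y ∈ s, w y * (M - crossL c y)
          = (∑ y ∈ s, w y) * M - ∑ y ∈ s, w y * crossL c y := by
        rw [Finset.sum_mul, ← Finset.sum_sub_distrib]
        congr 1; ext y; ring
      rw [expand, hw1, one_mul, ← hfz]
      ring
    intro y hy
    have := (Finset.sum_eq_zero_iff_of_nonneg ?_).1 hsum0 y hy
    · exact this
    · intro i hi
      exact mul_nonneg (hw0 i hi) (sub_nonneg.2 (hyle i hi))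
  have hsupp : ∀ y ∈ s, w y ≠ 0 → crossL c y = M := by
    intro y hy hwy
    have := hzero y hy
    rcases mul_eq_zero.1 this with h | h
    · exact absurd h hwy
    · linarith [sub_eq_zero.1 h]
  have hy0 : ∃ y ∈ s, w y ≠ 0 := by
    by_contra h
    push_neg at h
    have : ∑ y ∈ s, w y = 0 := Finset.sum_eq_zero h
    rw [hw1] at this
    exact one_ne_zero this
  obtain ⟨y0, hy0s, hy0w⟩ := hy0
  have hy0M : crossL c y0 = M := hsupp y0 hy0s hy0w
  -- the maximizing index set
  set A : Finset ℕ := (Finset.range m).filter (fun n => g n = M) with hA_def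
  have hval_cast : ∀ j : ZMod m, ((j.val : ℕ) : ZMod m) = j := fun j => ZMod.natCast_rightInverse j
  have hAmem : ∀ j : ZMod m, crossL c (v j) = M → j.val ∈ A := by
    intro j hj
    refine Finset.mem_filter.2 ⟨Finset.mem_range.2 (ZMod.val_lt _), ?_⟩
    simp only [hg, hval_cast j]
    exact hj
  have hAne : A.Nonempty := by
    obtain ⟨j0, _, hj0⟩ := Finset.mem_image.1 hy0s
    exact ⟨j0.val, hAmem j0 (by rw [hj0]; exact hy0M)⟩
  set a : ℕ := A.min' hAne with ha_def
  set b : ℕ := A.max' hAne with hb_def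
  have haA := A.min'_mem hAne
  have hbA := A.max'_mem hAne
  have hga : g a = M := (Finset.mem_filter.1 haA).2
  have hgb : g b = M := (Finset.mem_filter.1 hbA).2
  have hb_lt : b < m := Finset.mem_range.1 (Finset.mem_filter.1 hbA).1
  have hmono := theta_mono e hne hconv
  -- contiguity of the maximizer set
  have contig : ∀ n : ℕ, a ≤ n → n ≤ b → g n = M := by
    intro n hna hnb
    by_cases hg0M : g 0 = M
    · exact le_antisymm (hgM n) (hg0M ▸ hg0 n)
    have hg0lt : g 0 < M := lt_of_le_of_ne (hgM 0) hg0M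
    by_contra hgnM
    have hgn : g n < M := lt_of_le_of_ne (hgM n) hgnM
    have ha0 : 0 < a := Nat.pos_of_ne_zero (fun h => hg0M (by rw [← h]; exact hga))
    have hna' : a < n := lt_of_le_of_ne hna (fun h => hgnM (h ▸ hga))
    have hnb' : n < b := lt_of_le_of_ne hnb (fun h => hgnM (by rw [h]; exact hgb))
    have hgm : g m = g 0 := by
      simp only [hg]
      rw [show ((m : ℕ) : ZMod m) = ((0 : ℕ) : ZMod m) by
        rw [Nat.cast_zero]; exact_mod_cast ZMod.natCast_self m]
    obtain ⟨p0, hp01, hp02, hp0s⟩ := hexpos 0 a (Nat.zero_le a) (by rw [hga]; exact hg0lt)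
    obtain ⟨p, hp1, hp2, hps⟩ := hexneg a n hna'.le (by rw [hga]; exact hgn)
    obtain ⟨q, hq1, hq2, hqs⟩ := hexpos n b hnb'.le (by rw [hgb]; exact hgn)
    obtain ⟨q0, hq01, hq02, hq0s⟩ := hexneg b m hb_lt.le (by rw [hgb, hgm]; exact hg0lt)
    refine four_sign_lemma (x1 := theta e p0 - Complex.arg c) (x2 := theta e p - Complex.arg c)
      (x3 := theta e q - Complex.arg c) (x4 := theta e q0 - Complex.arg c) ?_ ?_ ?_ ?_
      hp0s hps hqs hq0s
    · have := hmono (show p0 ≤ p by omega); linarith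
    · have := hmono (show p ≤ q by omega); linarith
    · have := hmono (show q ≤ q0 by omega); linarith
    · have h1 := hmono (show q0 ≤ m by omega)
      have h2 := hmono (Nat.zero_le p0)
      have h3 := theta_last e hturn
      linarith
  -- the chain of segments
  have hab : a ≤ b := A.min'_le _ hbA
  set W : ℕ → ℂ := fun k => v ((a + k : ℕ) : ZMod m) with hW
  set T : Set ℂ := {W 0} ∪ ⋃ k ∈ Finset.range (b - a), segment ℝ (W k) (W (k + 1)) with hT
  obtain ⟨hTpre, hWmem⟩ := chain_preconn W (b - a)
  have hTsub : T ⊆ ⋃ i : ZMod m, segment ℝ (v i) (v (i + 1)) := by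
    intro x hx
    rcases hx with hx | hx
    · rw [Set.mem_singleton_iff] at hx
      subst hx
      refine Set.mem_iUnion.2 ⟨((a : ℕ) : ZMod m), ?_⟩
      have hW0 : W 0 = v ((a : ℕ) : ZMod m) := by simp [hW]
      rw [hW0]
      exact left_mem_segment ℝ _ _
    · simp only [Set.mem_iUnion, exists_prop] at hx
      obtain ⟨k, hkr, hxk⟩ := hx
      refine Set.mem_iUnion.2 ⟨((a + k : ℕ) : ZMod m), ?_⟩
      have hcast : ((a + k + 1 : ℕ) : ZMod m) = ((a + k : ℕ) : ZMod m) + 1 := by push_cast; ring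
      have hxk' : x ∈ segment ℝ (v ((a + k : ℕ) : ZMod m)) (v ((a + k + 1 : ℕ) : ZMod m)) := by
        simpa only [hW, ← add_assoc] using hxk
      rw [hcast] at hxk'
      exact hxk'
  have hgak : ∀ k : ℕ, k ≤ b - a → crossL c (W k) = M := by
    intro k hk
    simp only [hW, hg] at contig ⊢
    exact contig (a + k) (Nat.le_add_right a k) (by omega)
  
  have hTline : ∀ x ∈ T, crossL c x = M := by
    intro x hx
    rcases hx with hx | hx
    · rw [Set.mem_singleton_iff] at hx
      subst hx
      exact hgak 0 (Nat.zero_le _)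
    · simp only [Set.mem_iUnion, exists_prop] at hx
      obtain ⟨k, hkr, hxk⟩ := hx
      have hkN : k < b - a := Finset.mem_range.1 hkr
      have h1 : crossL c (W k) = M := hgak k hkN.le
      have h2 : crossL c (W (k + 1)) = M := hgak (k + 1) hkN
      exact (convex_hyperplane (𝕜 := ℝ) (crossL c).isLinear M).segment_subset h1 h2 hxk
  -- z is in the hull of maximizing vertices
  set s' : Finset ℂ := s.filter (fun y => crossL c y = M) with hs'
  have hs'T : ∀ y ∈ s', y ∈ T := by
    intro y hy
    obtain ⟨hys, hyM⟩ := Finset.mem_filter.1 hy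
    obtain ⟨j, _, hj⟩ := Finset.mem_image.1 hys
    have hjA : j.val ∈ A := hAmem j (by rw [hj]; exact hyM)
    have h1 : a ≤ j.val := A.min'_le _ hjA
    have h2 : j.val ≤ b := A.le_max' _ hjA
    have hyW : y = W (j.val - a) := by
      simp only [hW]
      rw [show a + (j.val - a) = j.val by omega, hval_cast j, hj]
    rw [hyW]
    exact hWmem (j.val - a) (by omega)
  have hzs' : z ∈ convexHull ℝ (↑s' : Set ℂ) := by
    have hfil := Finset.centerMass_filter_ne_zero (t := s) (w := w) (id : ℂ → ℂ)
    rw [hwz] at hfil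
    rw [← hfil]
    apply Finset.centerMass_mem_convexHull
    · intro y hy
      exact hw0 y (Finset.mem_filter.1 hy).1
    · rw [Finset.sum_filter_ne_zero, hw1]
      exact one_pos
    · intro y hy
      obtain ⟨hys, hyw⟩ := Finset.mem_filter.1 hy
      exact Finset.mem_coe.2 (Finset.mem_filter.2 ⟨hys, hsupp y hys hyw⟩)
  -- the horizontal coordinate
  set ρ : ℂ →ₗ[ℝ] ℝ := Complex.reLm.comp (LinearMap.mulLeft ℝ ((starRingEnd ℂ) c)) with hρ
  have hρcont : Continuous ρ := ρ.continuous_of_finiteDimensional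
  have hs'ne : s'.Nonempty := ⟨y0, Finset.mem_filter.2 ⟨hy0s, hy0M⟩⟩
  set s'' : Finset ℝ := s'.image (fun y => ρ y) with hs''
  have hs''ne : s''.Nonempty := hs'ne.image _
  set B1 : ℝ := s''.min' hs''ne with hB1
  set B2 : ℝ := s''.max' hs''ne with hB2
  have hhull_le : ∀ x ∈ convexHull ℝ (↑s' : Set ℂ), ρ x ≤ B2 := by
    intro x hx
    refine convexHull_min ?_ (convex_halfSpace_le ρ.isLinear B2) hx
    intro y hy
    exact s''.le_max' (ρ y) (Finset.mem_image.2 ⟨y, Finset.mem_coe.1 hy, rfl⟩)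
  have hhull_ge : ∀ x ∈ convexHull ℝ (↑s' : Set ℂ), B1 ≤ ρ x := by
    intro x hx
    refine convexHull_min ?_ (convex_halfSpace_ge ρ.isLinear B1) hx
    intro y hy
    exact s''.min'_le (ρ y) (Finset.mem_image.2 ⟨y, Finset.mem_coe.1 hy, rfl⟩)
  obtain ⟨y1, hy1s', hy1ρ⟩ := Finset.mem_image.1 (s''.min'_mem hs''ne)
  obtain ⟨y2, hy2s', hy2ρ⟩ := Finset.mem_image.1 (s''.max'_mem hs''ne)
  have hIcc : Set.Icc B1 B2 ⊆ ρ '' T := by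
    apply IsPreconnected.Icc_subset (hTpre.image ρ hρcont.continuousOn)
    · exact ⟨y1, hs'T y1 hy1s', hy1ρ⟩
    · exact ⟨y2, hs'T y2 hy2s', hy2ρ⟩
  obtain ⟨t, htT, hρt⟩ := hIcc ⟨hhull_ge z hzs', hhull_le z hzs'⟩
  have htz : t = z := by
    have hcc : (starRingEnd ℂ) c ≠ 0 := by simpa using hc
    have heq : (starRingEnd ℂ) c * t = (starRingEnd ℂ) c * z := by
      apply Complex.ext
      · exact hρt
      · exact (hTline t htT).trans hM
    exact mul_left_cancel₀ hcc heq
  exact hTsub (htz ▸ htT)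

end LCPchain

section LCPcover

open Complex Finset Real

variable {m : ℕ} [NeZero m]

lemma cover_B (v e : ZMod m → ℂ) (he : ∀ i, e i = v (i + 1) - v i) (hne : ∀ i, e i ≠ 0)
    (hconv : ∀ i, 0 ≤ ((starRingEnd ℂ) (e (i - 1)) * e i).im)
    (hturn : ∑ i : ZMod m, Complex.arg (e i / e (i - 1)) = 2 * π)
    (c : ℂ) (hc : c ≠ 0) (z : ℂ)
    (hz : z ∈ convexHull ℝ (Set.range v))
    (hmax : ∀ w ∈ convexHull ℝ (Set.range v), crossL c w ≤ crossL c z) :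
    z ∈ ⋃ i : ZMod m, segment ℝ (v i) (v (i + 1)) := by
  obtain ⟨i₀, -, hi₀⟩ := Finset.exists_min_image (Finset.univ : Finset (ZMod m))
    (fun i => crossL c (v i)) ⟨0, Finset.mem_univ 0⟩
  set v' : ZMod m → ℂ := fun k => v (k + i₀) with hv'
  set e' : ZMod m → ℂ := fun k => e (k + i₀) with he'
  have he'' : ∀ k, e' k = v' (k + 1) - v' k := by
    intro k
    simp only [hv', he']
    rw [he (k + i₀)]
    ring_nf
  have hne' : ∀ k, e' k ≠ 0 := fun k => hne _
  have hconv' : ∀ k, 0 ≤ ((starRingEnd ℂ) (e' (k - 1)) * e' k).im := by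
    intro k
    have hcast : k - 1 + i₀ = k + i₀ - 1 := by ring
    simp only [he', hcast]
    exact hconv (k + i₀)
  have hturn' : ∑ k : ZMod m, Complex.arg (e' k / e' (k - 1)) = 2 * π := by
    have hstep : ∀ k : ZMod m, Complex.arg (e' k / e' (k - 1))
        = Complex.arg (e (k + i₀) / e ((k + i₀) - 1)) := by
      intro k
      simp only [he']
      congr 2
      ring_nf
    rw [Finset.sum_congr rfl (fun k _ => hstep k)]
    rw [Fintype.sum_equiv (Equiv.addRight i₀)
      (fun k => Complex.arg (e (k + i₀) / e (k + i₀ - 1)))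
      (fun k => Complex.arg (e k / e (k - 1))) (fun k => rfl)]
    exact hturn
  have hrange : Set.range v' = Set.range v := by
    have hsurj : Function.Surjective (fun k : ZMod m => k + i₀) := (Equiv.addRight i₀).surjective
    have := Function.Surjective.range_comp hsurj v
    simpa [hv', Function.comp_def] using this
  have hz' : z ∈ convexHull ℝ (Set.range v') := by rw [hrange]; exact hz
  have hmax' : ∀ w ∈ convexHull ℝ (Set.range v'), crossL c w ≤ crossL c z := by
    rw [hrange]; exact hmax
  have hmin' : ∀ i : ZMod m, crossL c (v' 0) ≤ crossL c (v' i) := by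
    intro i
    simp only [hv', zero_add]
    exact hi₀ (i + i₀) (Finset.mem_univ _)
  have hres := cover_B0 v' e' he'' hne' hconv' hturn' c hc z hz' hmax' hmin'
  simp only [Set.mem_iUnion] at hres ⊢
  obtain ⟨i, hi⟩ := hres
  refine ⟨i + i₀, ?_⟩
  have : i + 1 + i₀ = i + i₀ + 1 := by ring
  simpa only [hv', this] using hi

end LCPcover

/-- Let `v 0, ..., v (m-1)` (`m ≥ 3`, indices mod `m`) be the vertices of a
closed polygonal curve in the plane (identified with `ℂ`), with nondegenerate
edges `e i = v (i+1) - v i`. If the polygon is locally convex at every vertex —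
the cross product of consecutive edge vectors is weakly positive — and the edge
directions make exactly one full turn (the exterior angles sum to `2π`), then
the polygonal curve is the boundary of a convex polygon: the boundary of the
convex hull of the vertices is the union of the edges. -/
theorem locally_convex_polygon_is_convex (m : ℕ) [NeZero m] (hm : 3 ≤ m)
    (v : ZMod m → ℂ) (e : ZMod m → ℂ)
    (he : ∀ i, e i = v (i + 1) - v i)
    (hne : ∀ i, e i ≠ 0)
    (hconv : ∀ i, 0 ≤ ((starRingEnd ℂ) (e (i - 1)) * e i).im)
    (hturn : ∑ i : ZMod m, Complex.arg (e i / e (i - 1)) = 2 * Real.pi) :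
    frontier (convexHull ℝ (Set.range v)) = ⋃ i : ZMod m, segment ℝ (v i) (v (i + 1)) := by
  set K : Set ℂ := convexHull ℝ (Set.range v) with hK
  have hKclosed : IsClosed K := ((Set.finite_range v).isCompact_convexHull (𝕜 := ℝ)).isClosed
  have hKconv : Convex ℝ K := convex_convexHull ℝ _
  have hfr : frontier K = K \ interior K := hKclosed.frontier_eq
  have hhalf := halfplane v e he hne hconv hturn
  have hKsub : ∀ i : ZMod m, K ⊆ {w | crossL (e i) (v i) ≤ crossL (e i) w} := by
    intro i
    apply convexHull_min ?_ (convex_halfSpace_ge (crossL (e i)).isLinear _)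
    rintro w ⟨j, rfl⟩
    have h0 := hhalf i j
    rw [map_sub] at h0
    simpa using h0
  refine Set.Subset.antisymm ?_ ?_
  · -- frontier ⊆ union of segments
    intro x hx
    rw [hfr] at hx
    obtain ⟨hxK, hxnotint⟩ := hx
    by_cases hdeg : ∀ j : ZMod m, crossL (e 0) (v j - v 0) = 0
    · -- degenerate case: all vertices on a line
      have hline : K ⊆ {w | crossL (e 0) w = crossL (e 0) (v 0)} := by
        apply convexHull_min ?_ (convex_hyperplane (crossL (e 0)).isLinear _)
        rintro w ⟨j, rfl⟩
        have h0 := hdeg j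
        rw [map_sub] at h0
        simp only [Set.mem_setOf_eq]
        linarith
      refine cover_B v e he hne hconv hturn (e 0) (hne 0) x hxK ?_
      intro w hw
      rw [hline hw, hline hxK]
    · push_neg at hdeg
      obtain ⟨j0, hj0⟩ := hdeg
      have hj0pos : 0 < crossL (e 0) (v j0 - v 0) := lt_of_le_of_ne (hhalf 0 j0) (Ne.symm hj0)
      have hrange_ne : (Set.range v).Nonempty := ⟨v 0, ⟨0, rfl⟩⟩
      have hint_ne : (interior K).Nonempty := by
        rw [hKconv.interior_nonempty_iff_affineSpan_eq_top, hK, affineSpan_convexHull,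
          AffineSubspace.affineSpan_eq_top_iff_vectorSpan_eq_top_of_nonempty ℝ ℂ ℂ hrange_ne]
        refine eq_top_iff.2 ?_
        intro u _
        have h1 : e 0 ∈ vectorSpan ℝ (Set.range v) := by
          rw [he 0, ← vsub_eq_sub]
          exact vsub_mem_vectorSpan ℝ ⟨0 + 1, rfl⟩ ⟨0, rfl⟩
        have h2 : v j0 - v 0 ∈ vectorSpan ℝ (Set.range v) := by
          rw [← vsub_eq_sub]
          exact vsub_mem_vectorSpan ℝ ⟨j0, rfl⟩ ⟨0, rfl⟩
        have hcr := cross_identity (e 0) (v j0 - v 0) u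
        have hu_eq : u = (crossL (e 0) (v j0 - v 0))⁻¹ •
            (crossL (e 0) u • (v j0 - v 0) - crossL (v j0 - v 0) u • e 0) := by
          rw [← hcr, inv_smul_smul₀ (ne_of_gt hj0pos)]
        rw [hu_eq]
        exact Submodule.smul_mem _ _ (Submodule.sub_mem _ (Submodule.smul_mem _ _ h2)
          (Submodule.smul_mem _ _ h1))
      obtain ⟨y0, hy0⟩ := hint_ne
      obtain ⟨f, hf⟩ := geometric_hahn_banach_open_point hKconv.interior isOpen_interior hxnotint
      have hfle : ∀ w ∈ K, f w ≤ f x := by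
        intro w hw
        by_contra hlt
        push_neg at hlt
        have hy0x : f y0 < f x := hf y0 hy0
        have hwy0 : 0 < f w - f y0 := by linarith
        set t : ℝ := min 1 ((f w - f x) / (f w - f y0)) with ht
        have htpos : 0 < t := lt_min one_pos (div_pos (by linarith) hwy0)
        have ht1 : t ≤ 1 := min_le_left _ _
        have hmem : t • y0 + (1 - t) • w ∈ interior K :=
          hKconv.combo_interior_closure_mem_interior hy0 (subset_closure hw) htpos
            (by linarith) (by ring)
        have hcomb := hf _ hmem
        rw [map_add, map_smul, map_smul] at hcomb
        have htle : t * (f w - f y0) ≤ f w - f x := by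
          have hmin2 : t ≤ (f w - f x) / (f w - f y0) := min_le_right _ _
          calc t * (f w - f y0) ≤ ((f w - f x) / (f w - f y0)) * (f w - f y0) := by nlinarith
            _ = f w - f x := by field_simp
        simp only [smul_eq_mul] at hcomb
        nlinarith
      set c' : ℂ := (f Complex.I : ℂ) - (f 1 : ℂ) * Complex.I with hc'
      have hcw : ∀ w : ℂ, crossL c' w = f w := by
        intro w
        have hw_decomp : w = (w.re : ℝ) • (1 : ℂ) + (w.im : ℝ) • Complex.I := by
          apply Complex.ext <;> simp
        rw [crossL_coords]
        conv_rhs => rw [hw_decomp]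
        rw [map_add, map_smul, map_smul]
        simp only [smul_eq_mul, hc', Complex.sub_re, Complex.sub_im, Complex.ofReal_re,
          Complex.ofReal_im, Complex.mul_re, Complex.mul_im, Complex.I_re, Complex.I_im]
        ring
      have hc'0 : c' ≠ 0 := by
        intro h0
        have hzero : ∀ w : ℂ, f w = 0 := by
          intro w
          rw [← hcw w, h0, crossL_coords]
          simp
        have h1 : f y0 < f x := hf y0 hy0
        rw [hzero y0, hzero x] at h1
        exact lt_irrefl 0 h1
      refine cover_B v e he hne hconv hturn c' hc'0 x hxK ?_
      intro w hw
      rw [hcw, hcw]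
      exact hfle w hw
  · -- union of segments ⊆ frontier
    intro x hx
    simp only [Set.mem_iUnion] at hx
    obtain ⟨i, hxi⟩ := hx
    have hviK : ∀ j : ZMod m, v j ∈ K := fun j => subset_convexHull ℝ _ ⟨j, rfl⟩
    have hxK : x ∈ K := hKconv.segment_subset (hviK i) (hviK (i + 1)) hxi
    obtain ⟨α, β, hα, hβ, hαβ, hx_eq⟩ := hxi
    have hx' : x - v i = (β : ℝ) • e i := by
      rw [← hx_eq, he i]
      simp only [Complex.real_smul]
      have hα' : (α : ℂ) = 1 - (β : ℂ) := by
        have : (α : ℝ) = 1 - β := by linarith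
        exact_mod_cast congrArg (fun r : ℝ => (r : ℂ)) this
      rw [hα']
      ring
    have hcross0 : crossL (e i) (x - v i) = 0 := by
      rw [hx', map_smul, crossL_self]
      simp
    rw [hfr]
    refine ⟨hxK, ?_⟩
    intro hint
    rw [mem_interior_iff_mem_nhds] at hint
    obtain ⟨ε, hε, hball⟩ := Metric.mem_nhds_iff.1 hint
    set u : ℂ := Complex.I * e i with hu_def
    have hu : crossL (e i) u = Complex.normSq (e i) := by
      rw [crossL_apply, hu_def, show (starRingEnd ℂ) (e i) * (Complex.I * e i)
        = Complex.I * ((starRingEnd ℂ) (e i) * e i) by ring, ← Complex.normSq_eq_conj_mul_self]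
      simp [Complex.mul_im]
    have hupos : 0 < crossL (e i) u := by
      rw [hu]; exact Complex.normSq_pos.2 (hne i)
    have hu0 : u ≠ 0 := mul_ne_zero Complex.I_ne_zero (hne i)
    have hunorm : 0 < ‖u‖ := norm_pos_iff.2 hu0
    set t : ℝ := ε / (2 * ‖u‖) with htdef
    have htpos : 0 < t := div_pos hε (by positivity)
    have hymem : x - t • u ∈ Metric.ball x ε := by
      rw [Metric.mem_ball, dist_eq_norm, sub_sub_cancel_left, norm_neg,
        norm_smul, Real.norm_eq_abs, abs_of_pos htpos, htdef]
      rw [div_mul_eq_mul_div, div_lt_iff₀ (by positivity : (0:ℝ) < 2 * ‖u‖)]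
      nlinarith
    have hyK : x - t • u ∈ K := hball hymem
    have hineq := hKsub i hyK
    simp only [Set.mem_setOf_eq] at hineq
    have e1 : crossL (e i) (x - t • u) = crossL (e i) x - t * crossL (e i) u := by
      rw [map_sub, map_smul, smul_eq_mul]
    have e2 : crossL (e i) x - crossL (e i) (v i) = 0 := by
      rw [← map_sub]
      exact hcross0
    rw [e1] at hineq
    nlinarith
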